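/- Fix λ > 0, n ≥ k ≥ 1, an m×n matrix Y and an m×p matrix X. Let V_j ∈ 𝕆^{n×k} with V_j → V* ∈ 𝕆^{n×k}, and let S_j ∈ ℝ^{p×k} with S_j → S* ∈ ℝ^{p×k}, such that for every j, S_j globally minimizes S ↦ F(S, V_j) over ℝ^{p×k}. Then S* globally minimizes S ↦ F(S, V*) over ℝ^{p×k}. (That is, the point-to-set map V ↦ argmin_S F(S, V) is closed.) -/

import Mathlib

open Matrix Finset Filter Topology

noncomputable section

/-- Squared Frobenius norm of a matrix. -/
def frobSq {m n : ℕ} (M : Matrix (Fin m) (Fin n) ℝ) : ℝ := ∑ i, ∑ j, (M i j) ^ 2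

/-- Frobenius norm. -/
def frobNorm {m n : ℕ} (M : Matrix (Fin m) (Fin n) ℝ) : ℝ := Real.sqrt (frobSq M)

/-- Euclidean norm of a vector. -/
def eNorm {n : ℕ} (v : Fin n → ℝ) : ℝ := Real.sqrt (∑ j, (v j) ^ 2)

/-- Sum of the Euclidean norms of the rows, `‖S‖_{2,1}`. -/
def norm21 {p n : ℕ} (B : Matrix (Fin p) (Fin n) ℝ) : ℝ := ∑ i, eNorm (B i)

/-- `V` has orthonormal columns: `V ∈ 𝕆^{n×k}`. -/
def IsOrthCol {n k : ℕ} (V : Matrix (Fin n) (Fin k) ℝ) : Prop := Vᵀ * V = 1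

/-- The objective `F(S, V) = ½‖Y − XSV′‖²_F + λ‖S‖_{2,1}`. -/
def Fobj {m n p k : ℕ} (Y : Matrix (Fin m) (Fin n) ℝ) (X : Matrix (Fin m) (Fin p) ℝ)
    (lam : ℝ) (S : Matrix (Fin p) (Fin k) ℝ) (V : Matrix (Fin n) (Fin k) ℝ) : ℝ :=
  (1 / 2) * frobSq (Y - X * S * Vᵀ) + lam * norm21 S


open Filter Topology

lemma frobSq_continuous {m n : ℕ} : Continuous (frobSq (m := m) (n := n)) := by
  unfold frobSq
  refine continuous_finset_sum _ fun i _ => continuous_finset_sum _ fun j _ => ?_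
  exact ((continuous_apply j).comp (continuous_apply i)).pow 2

lemma eNorm_continuous {n : ℕ} : Continuous (eNorm (n := n)) := by
  unfold eNorm
  exact Real.continuous_sqrt.comp
    (continuous_finset_sum _ fun j _ => (continuous_apply j).pow 2)

lemma norm21_continuous {p n : ℕ} : Continuous (norm21 (p := p) (n := n)) := by
  unfold norm21
  exact continuous_finset_sum _ fun i _ => eNorm_continuous.comp (continuous_apply i)

lemma Fobj_continuous {m n p k : ℕ} (Y : Matrix (Fin m) (Fin n) ℝ)
    (X : Matrix (Fin m) (Fin p) ℝ) (lam : ℝ) :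
    Continuous (fun q : Matrix (Fin p) (Fin k) ℝ × Matrix (Fin n) (Fin k) ℝ =>
      Fobj Y X lam q.1 q.2) := by
  unfold Fobj
  have hc : Continuous (fun q : Matrix (Fin p) (Fin k) ℝ × Matrix (Fin n) (Fin k) ℝ =>
      Y - X * q.1 * q.2ᵀ) := by
    have h1 : Continuous (fun q : Matrix (Fin p) (Fin k) ℝ × Matrix (Fin n) (Fin k) ℝ =>
        X * q.1) := continuous_const.matrix_mul continuous_fst
    have h2 : Continuous (fun q : Matrix (Fin p) (Fin k) ℝ × Matrix (Fin n) (Fin k) ℝ =>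
        q.2ᵀ) := continuous_snd.matrix_transpose
    exact continuous_const.sub (h1.matrix_mul h2)
  exact (continuous_const.mul (frobSq_continuous.comp hc)).add
    (continuous_const.mul (norm21_continuous.comp continuous_fst))

/-- Lemma 4 (closedness of the point-to-set map `V ↦ argmin_S F(S, V)`). -/
theorem stmt15 {m n p k : ℕ} (lam : ℝ) (hlam : 0 < lam) (hk : 1 ≤ k) (hkn : k ≤ n)
    (Y : Matrix (Fin m) (Fin n) ℝ) (X : Matrix (Fin m) (Fin p) ℝ)
    (Vseq : ℕ → Matrix (Fin n) (Fin k) ℝ) (Sseq : ℕ → Matrix (Fin p) (Fin k) ℝ)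
    (Vstar : Matrix (Fin n) (Fin k) ℝ) (Sstar : Matrix (Fin p) (Fin k) ℝ)
    (hVseq : ∀ j, IsOrthCol (Vseq j)) (hVstar : IsOrthCol Vstar)
    (hVlim : Tendsto Vseq atTop (𝓝 Vstar)) (hSlim : Tendsto Sseq atTop (𝓝 Sstar))
    (hSmin : ∀ j, ∀ S : Matrix (Fin p) (Fin k) ℝ,
      Fobj Y X lam (Sseq j) (Vseq j) ≤ Fobj Y X lam S (Vseq j)) :
    ∀ S : Matrix (Fin p) (Fin k) ℝ, Fobj Y X lam Sstar Vstar ≤ Fobj Y X lam S Vstar := by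
  intro S
  have hpair : Tendsto (fun j => (Sseq j, Vseq j)) atTop (𝓝 (Sstar, Vstar)) :=
    by rw [nhds_prod_eq]; exact hSlim.prodMk hVlim
  have ht : Tendsto (fun q : Matrix (Fin p) (Fin k) ℝ × Matrix (Fin n) (Fin k) ℝ =>
      Fobj Y X lam q.1 q.2) (𝓝 (Sstar, Vstar)) (𝓝 (Fobj Y X lam Sstar Vstar)) :=
    (Fobj_continuous Y X lam).tendsto (Sstar, Vstar)
  have h1 : Tendsto (fun j => Fobj Y X lam (Sseq j) (Vseq j)) atTop
      (𝓝 (Fobj Y X lam Sstar Vstar)) := by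
    have h := ht.comp hpair
    simp only [Function.comp_def] at h
    exact h
  have h2 : Tendsto (fun j => Fobj Y X lam S (Vseq j)) atTop
      (𝓝 (Fobj Y X lam S Vstar)) := by
    have hpair2 : Tendsto (fun j => ((S : Matrix (Fin p) (Fin k) ℝ), Vseq j)) atTop
        (𝓝 (S, Vstar)) := by rw [nhds_prod_eq]; exact tendsto_const_nhds.prodMk hVlim
    have ht2 : Tendsto (fun q : Matrix (Fin p) (Fin k) ℝ × Matrix (Fin n) (Fin k) ℝ =>
        Fobj Y X lam q.1 q.2) (𝓝 (S, Vstar)) (𝓝 (Fobj Y X lam S Vstar)) :=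
      (Fobj_continuous Y X lam).tendsto (S, Vstar)
    have h := ht2.comp hpair2
    simp only [Function.comp_def] at h
    exact h
  exact le_of_tendsto_of_tendsto' h1 h2 fun j => hSmin j S

end
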